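/- For each nonempty compact list l with unique factorization l = l_1 ∗̄ l_2 ∗̄ ⋯ ∗̄ l_r into ∗̄-irreducible lists, set B(l) := l_1 ↑̄ l_2 ↑̄ ⋯ ↑̄ l_r ∈ k⟨L⟩, and set B([]) := []. Then: (α) the family (B(l)), indexed by the compact lists l, is a k-basis of the k-submodule of k⟨L⟩ spanned by the compact lists; (β) B(l ∗̄ l') = B(l) ↑̄ B(l') for all compact lists l, l'. -/

import Mathlib

open scoped TensorProduct

/-- A monomial: a nonzero finitely supported multi-index with support contained in `{1,2,…}`. -/
def Mon : Type := {m : ℕ →₀ ℕ // m ≠ 0 ∧ m 0 = 0}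

namespace Mon

/-- Product of monomials: pointwise addition of multi-indices. -/
noncomputable instance : Mul Mon :=
  ⟨fun a b =>
    ⟨a.1 + b.1, by
      constructor
      · intro h
        exact a.2.1 ((add_eq_zero.mp h).1)
      · simp [Finsupp.add_apply, a.2.2, b.2.2]⟩⟩

/-- The total degree (weight) of a monomial. -/
def w (m : Mon) : ℕ := m.1.sum fun _ v => v

/-- The set of variable indices occurring in a list of monomials. -/
def IndAlph (l : List Mon) : Finset ℕ := (l.map fun m => m.1.support).foldr (· ∪ ·) ∅

/-- The maximal variable index occurring in a list of monomials (`0` for the empty list). -/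
def maxInd (l : List Mon) : ℕ := (IndAlph l).sup id

/-- The embedding `i ↦ i + p` of `ℕ` into itself. -/
def addEmb (p : ℕ) : ℕ ↪ ℕ := ⟨fun i => i + p, fun a b h => by simpa using h⟩

/-- The shift `T_p` of a monomial: translate the support by `p`. -/
noncomputable def Tmon (p : ℕ) (m : Mon) : Mon :=
  ⟨m.1.embDomain (addEmb p), by
    refine ⟨fun h => m.2.1 (Finsupp.embDomain_eq_zero.mp h), ?_⟩
    by_cases hp : p = 0
    · subst hp
      have h0 : (Finsupp.embDomain (addEmb 0) m.1) ((addEmb 0) 0) = m.1 0 :=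
        by first
          | exact Finsupp.embDomain_apply_self _ _ _
          | simp [Finsupp.embDomain_apply]
      simpa [addEmb] using h0.trans m.2.2
    · apply Finsupp.embDomain_notin_range
      rintro ⟨i, hi⟩
      simp only [addEmb, Function.Embedding.coeFn_mk] at hi
      have hi' : i + p = 0 := hi
      omega⟩

/-- Shifted concatenation of lists of monomials. -/
noncomputable def sconc (l₁ l₂ : List Mon) : List Mon := l₁ ++ l₂.map (Tmon (maxInd l₁))

/-- A list of monomials is compact when its alphabet has no holes:
`IndAlph l = {1,…,card (IndAlph l)}`. -/
def Compact (l : List Mon) : Prop := IndAlph l = Finset.Icc 1 (IndAlph l).card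

/-- The re-indexing function of a list `l` : on `IndAlph l` it is the unique strictly
increasing bijection onto `{1,…,card (IndAlph l)}` (extended injectively elsewhere). -/
noncomputable def phi (l : List Mon) (i : ℕ) : ℕ :=
  if h : i ∈ IndAlph l then
    (((IndAlph l).orderIsoOfFin rfl).symm ⟨i, h⟩ : Fin (IndAlph l).card) + 1
  else i + (IndAlph l).card + 1

lemma phi_pos (l : List Mon) (i : ℕ) : 1 ≤ phi l i := by
  unfold phi; split_ifs <;> omega

lemma phi_inj (l : List Mon) : Function.Injective (phi l) := by
  intro a b hab
  unfold phi at hab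
  split_ifs at hab with ha hb hb
  · have h1 : (((IndAlph l).orderIsoOfFin rfl).symm ⟨a, ha⟩) =
        (((IndAlph l).orderIsoOfFin rfl).symm ⟨b, hb⟩) := Fin.ext (by omega)
    have h2 := congrArg ((IndAlph l).orderIsoOfFin rfl) h1
    rw [OrderIso.apply_symm_apply, OrderIso.apply_symm_apply] at h2
    exact congrArg Subtype.val h2
  · have := (((IndAlph l).orderIsoOfFin rfl).symm ⟨a, ha⟩).isLt; omega
  · have := (((IndAlph l).orderIsoOfFin rfl).symm ⟨b, hb⟩).isLt; omega
  · omega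

/-- Action of the compacting operator of `l` on a single monomial. -/
noncomputable def cptMon (l : List Mon) (m : Mon) : Mon :=
  ⟨m.1.mapDomain (phi l), by
    constructor
    · intro h
      apply m.2.1
      exact Finsupp.mapDomain_injective (phi_inj l) (by simpa using h)
    · apply Finsupp.mapDomain_notin_range
      rintro ⟨i, hi⟩
      have := phi_pos l i
      omega⟩

/-- The compacting operator on lists of monomials. -/
noncomputable def cpt (l : List Mon) : List Mon := l.map (cptMon l)

/-- `sub l I` is the sublist of `l` consisting of the entries whose (1-based) position
belongs to `I`. -/
def sub (l : List Mon) (I : Finset ℕ) : List Mon :=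
  (List.range l.length).filterMap fun j => if j + 1 ∈ I then l[j]? else none

/-- `∗̄`-irreducible lists: nonempty and with no factorization into two nonempty lists. -/
def SIrred (l : List Mon) : Prop :=
  l ≠ [] ∧ ∀ u v : List Mon, l = sconc u v → u = [] ∨ v = []

end Mon

/-- The free `k`-module on the set of lists of monomials. -/
abbrev FreeL (k : Type*) [CommRing k] : Type _ := (List Mon) →₀ k

/-- Weight of a list: sum of the weights of its entries. -/
def wl {A : Type*} (w : A → ℕ) (l : List A) : ℕ := (l.map w).sum

/-- The twisted law `↑` on basis lists, with crossing parameter `qc` and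
superposition parameter `qs`. -/
noncomputable def tw {A : Type*} [Mul A] (k : Type*) [CommRing k] (qc qs : k) (w : A → ℕ) :
    List A → List A → (List A →₀ k)
  | u, [] => Finsupp.single u 1
  | [], b :: v => Finsupp.single (b :: v) 1
  | a :: u, b :: v =>
      Finsupp.mapDomain (a :: ·) (tw k qc qs w u (b :: v))
        + qc ^ (wl w (a :: u) * w b) • Finsupp.mapDomain (b :: ·) (tw k qc qs w (a :: u) v)
        + (qc ^ (wl w u * w b) * qs ^ (w a * w b)) •
            Finsupp.mapDomain ((a * b) :: ·) (tw k qc qs w u v)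
  termination_by u v => u.length + v.length
  decreasing_by all_goals simp <;> omega

/-- The bilinear extension of the twisted law `↑` to the free module on lists. -/
noncomputable def twL {A : Type*} [Mul A] (k : Type*) [CommRing k] (qc qs : k) (w : A → ℕ) :
    (List A →₀ k) →ₗ[k] (List A →₀ k) →ₗ[k] (List A →₀ k) :=
  Finsupp.lift _ k _ fun u => Finsupp.lift _ k _ fun v => tw k qc qs w u v

/-- The deformed shifted law `↑̄` on basis lists: `u ↑̄ v = u ↑ T_{maxInd u} v`. -/
noncomputable def twbar (k : Type*) [CommRing k] (qc qs : k) (u v : List Mon) : FreeL k :=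
  tw k qc qs Mon.w u (v.map (Mon.Tmon (Mon.maxInd u)))

/-- The bilinear extension of the deformed shifted law `↑̄` to the free module. -/
noncomputable def twbarL (k : Type*) [CommRing k] (qc qs : k) :
    FreeL k →ₗ[k] FreeL k →ₗ[k] FreeL k :=
  Finsupp.lift _ k _ fun u => Finsupp.lift _ k _ fun v => twbar k qc qs u v

/-- The `k`-submodule of `k⟨L⟩` spanned by the compact lists. -/
noncomputable def CompSpan (k : Type*) [CommRing k] : Submodule k (FreeL k) :=
  Submodule.span k {x : FreeL k | ∃ l : List Mon, Mon.Compact l ∧ x = Finsupp.single l 1}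

namespace StmtAux
open Mon Finsupp

noncomputable instance : DecidableEq Mon := Classical.decEq _
noncomputable instance : DecidableEq (List Mon) := Classical.decEq _

/-! ### Basic lemmas on monomials -/

lemma Mon.mul_def (a b : Mon) : (a * b).1 = a.1 + b.1 := rfl

lemma w_mul (a b : Mon) : Mon.w (a * b) = Mon.w a + Mon.w b := by
  unfold Mon.w
  rw [Mon.mul_def]
  exact Finsupp.sum_add_index' (fun _ => rfl) (fun _ _ _ => rfl)

lemma Tmon_def (p : ℕ) (m : Mon) : (Mon.Tmon p m).1 = m.1.embDomain (Mon.addEmb p) := rfl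

lemma addEmb_zero : Mon.addEmb 0 = Function.Embedding.refl ℕ := by
  apply DFunLike.ext; intro i; simp [Mon.addEmb]

lemma addEmb_apply' (p i : ℕ) : Mon.addEmb p i = i + p := rfl

lemma Tmon_zero (m : Mon) : Mon.Tmon 0 m = m := by
  apply Subtype.ext
  rw [Tmon_def, Finsupp.embDomain_eq_mapDomain,
    show ⇑(Mon.addEmb 0) = id from funext fun i => by simp [Mon.addEmb],
    Finsupp.mapDomain_id]

lemma Tmon_comp (p q : ℕ) (m : Mon) : Mon.Tmon p (Mon.Tmon q m) = Mon.Tmon (p + q) m := by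
  apply Subtype.ext
  rw [Tmon_def, Tmon_def, Tmon_def, Finsupp.embDomain_eq_mapDomain,
    Finsupp.embDomain_eq_mapDomain, Finsupp.embDomain_eq_mapDomain,
    ← Finsupp.mapDomain_comp,
    show (⇑(Mon.addEmb p) ∘ ⇑(Mon.addEmb q)) = ⇑(Mon.addEmb (p + q)) from
      funext fun i => by show i + q + p = i + (p + q); omega]

lemma Tmon_mul (p : ℕ) (a b : Mon) : Mon.Tmon p (a * b) = Mon.Tmon p a * Mon.Tmon p b := by
  apply Subtype.ext
  rw [Mon.mul_def, Tmon_def, Tmon_def, Tmon_def, Mon.mul_def, Finsupp.embDomain_add]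

lemma w_Tmon (p : ℕ) (m : Mon) : Mon.w (Mon.Tmon p m) = Mon.w m := by
  unfold Mon.w
  rw [Tmon_def]
  exact Finsupp.sum_embDomain

lemma support_Tmon (p : ℕ) (m : Mon) :
    (Mon.Tmon p m).1.support = m.1.support.map (Mon.addEmb p) := by
  rw [Tmon_def]; exact Finsupp.support_embDomain _ _

lemma support_mul (a b : Mon) : (a * b).1.support = a.1.support ∪ b.1.support := by
  ext i
  simp only [Finsupp.mem_support_iff, Mon.mul_def, Finsupp.add_apply, Finset.mem_union]
  omega

lemma support_pos {m : Mon} {i : ℕ} (hi : i ∈ m.1.support) : 1 ≤ i := by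
  rcases Nat.eq_zero_or_pos i with h | h
  · subst h; rw [Finsupp.mem_support_iff] at hi; exact absurd m.2.2 hi
  · exact h

lemma support_nonempty (m : Mon) : m.1.support.Nonempty :=
  Finsupp.support_nonempty_iff.mpr m.2.1

/-! ### IndAlph and maxInd -/

lemma IndAlph_nil : Mon.IndAlph [] = ∅ := rfl

lemma IndAlph_cons (m : Mon) (l : List Mon) :
    Mon.IndAlph (m :: l) = m.1.support ∪ Mon.IndAlph l := rfl

lemma IndAlph_append (l₁ l₂ : List Mon) :
    Mon.IndAlph (l₁ ++ l₂) = Mon.IndAlph l₁ ∪ Mon.IndAlph l₂ := by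
  induction l₁ with
  | nil => simp [IndAlph_nil, IndAlph_cons]
  | cons a t ih => simp [IndAlph_cons, ih, Finset.union_assoc]

lemma IndAlph_map_Tmon (p : ℕ) (l : List Mon) :
    Mon.IndAlph (l.map (Mon.Tmon p)) = (Mon.IndAlph l).map (Mon.addEmb p) := by
  induction l with
  | nil => simp [IndAlph_nil]
  | cons a t ih =>
      simp only [List.map_cons, IndAlph_cons, ih, support_Tmon, Finset.map_union]

lemma mem_IndAlph_pos {l : List Mon} {i : ℕ} (hi : i ∈ Mon.IndAlph l) : 1 ≤ i := by
  induction l with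
  | nil => simp [IndAlph_nil] at hi
  | cons a t ih =>
      rw [IndAlph_cons, Finset.mem_union] at hi
      rcases hi with h | h
      · exact support_pos h
      · exact ih h

lemma le_maxInd {l : List Mon} {i : ℕ} (hi : i ∈ Mon.IndAlph l) : i ≤ Mon.maxInd l :=
  Finset.le_sup (f := id) hi

lemma IndAlph_nonempty {l : List Mon} (hl : l ≠ []) : (Mon.IndAlph l).Nonempty := by
  cases l with
  | nil => exact absurd rfl hl
  | cons a t =>
      rw [IndAlph_cons]
      exact (support_nonempty a).mono Finset.subset_union_left

lemma maxInd_pos {l : List Mon} (hl : l ≠ []) : 1 ≤ Mon.maxInd l := by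
  obtain ⟨i, hi⟩ := IndAlph_nonempty hl
  exact le_trans (mem_IndAlph_pos hi) (le_maxInd hi)

lemma sup_add {s : Finset ℕ} (hs : s.Nonempty) (n : ℕ) :
    s.sup (fun i => i + n) = s.sup id + n := by
  apply le_antisymm
  · exact Finset.sup_le fun i hi => by
      exact Nat.add_le_add_right (Finset.le_sup (f := id) hi) n
  · obtain ⟨i, hi, hieq⟩ := Finset.exists_mem_eq_sup s hs id
    rw [hieq]
    exact Finset.le_sup (f := fun i => i + n) hi

lemma maxInd_map_Tmon {l : List Mon} (hl : l ≠ []) (p : ℕ) :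
    Mon.maxInd (l.map (Mon.Tmon p)) = Mon.maxInd l + p := by
  unfold Mon.maxInd
  rw [IndAlph_map_Tmon, Finset.sup_map]
  have : (id ∘ (Mon.addEmb p)) = fun i => i + p := by
    funext i; simp [addEmb_apply']
  rw [this, sup_add (IndAlph_nonempty hl)]

lemma IndAlph_sconc (u v : List Mon) :
    Mon.IndAlph (Mon.sconc u v)
      = Mon.IndAlph u ∪ (Mon.IndAlph v).map (Mon.addEmb (Mon.maxInd u)) := by
  unfold Mon.sconc
  rw [IndAlph_append, IndAlph_map_Tmon]

lemma maxInd_sconc (u v : List Mon) :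
    Mon.maxInd (Mon.sconc u v) = Mon.maxInd u + Mon.maxInd v := by
  by_cases hv : v = []
  · subst hv
    unfold Mon.sconc
    simp [Mon.maxInd, IndAlph_nil]
  · show (Mon.IndAlph (Mon.sconc u v)).sup id = _
    rw [IndAlph_sconc, Finset.sup_union, Finset.sup_map]
    have : (id ∘ (Mon.addEmb (Mon.maxInd u))) = fun i => i + Mon.maxInd u := by
      funext i; simp [addEmb_apply']
    rw [this, sup_add (IndAlph_nonempty hv)]
    show Mon.maxInd u ⊔ (Mon.maxInd v + Mon.maxInd u) = _
    omega

lemma sconc_nil_right (u : List Mon) : Mon.sconc u [] = u := by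
  simp [Mon.sconc]

lemma sconc_nil_left (v : List Mon) : Mon.sconc [] v = v := by
  unfold Mon.sconc
  have : Mon.maxInd [] = 0 := by simp [Mon.maxInd, IndAlph_nil]
  rw [this]
  simp only [show Mon.Tmon 0 = id from funext Tmon_zero, List.map_id, List.nil_append]

lemma sconc_length (u v : List Mon) :
    (Mon.sconc u v).length = u.length + v.length := by simp [Mon.sconc]

lemma sconc_assoc (u v z : List Mon) :
    Mon.sconc (Mon.sconc u v) z = Mon.sconc u (Mon.sconc v z) := by
  have h1 : Mon.sconc (Mon.sconc u v) z
      = u ++ (List.map (Mon.Tmon (Mon.maxInd u)) v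
          ++ List.map (Mon.Tmon (Mon.maxInd u + Mon.maxInd v)) z) := by
    show Mon.sconc u v ++ List.map (Mon.Tmon (Mon.maxInd (Mon.sconc u v))) z = _
    rw [maxInd_sconc]
    show u ++ _ ++ _ = _
    rw [List.append_assoc]
  rw [h1]
  show _ = u ++ List.map (Mon.Tmon (Mon.maxInd u))
      (v ++ List.map (Mon.Tmon (Mon.maxInd v)) z)
  rw [List.map_append, List.map_map]
  congr 2
  apply List.map_congr_left
  intro m _
  rw [Function.comp_apply, Tmon_comp, Nat.add_comm]

end StmtAux
namespace StmtAux
open Finsupp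

/-! ### wl lemmas -/

lemma wl_nil {A : Type*} (w : A → ℕ) : wl w ([] : List A) = 0 := rfl

lemma wl_cons {A : Type*} (w : A → ℕ) (a : A) (t : List A) :
    wl w (a :: t) = w a + wl w t := rfl

lemma wl_append {A : Type*} (w : A → ℕ) (s t : List A) :
    wl w (s ++ t) = wl w s + wl w t := by
  unfold wl; simp

/-! ### tw equation lemmas -/

variable {A : Type*} [Mul A] {k : Type*} [CommRing k] (qc qs : k) (w : A → ℕ)

lemma tw_nil_right (u : List A) : tw k qc qs w u [] = Finsupp.single u 1 := by
  cases u <;> rw [tw]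

lemma tw_nil_left (v : List A) : tw k qc qs w [] v = Finsupp.single v 1 := by
  cases v <;> rw [tw]

lemma tw_cons_cons (a b : A) (u v : List A) :
    tw k qc qs w (a :: u) (b :: v) =
      Finsupp.mapDomain (a :: ·) (tw k qc qs w u (b :: v))
        + qc ^ (wl w (a :: u) * w b) •
            Finsupp.mapDomain (b :: ·) (tw k qc qs w (a :: u) v)
        + (qc ^ (wl w u * w b) * qs ^ (w a * w b)) •
            Finsupp.mapDomain ((a * b) :: ·) (tw k qc qs w u v) := by
  rw [tw]

/-! ### twL computation lemmas -/

lemma twL_single_single (u v : List A) :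
    twL k qc qs w (Finsupp.single u 1) (Finsupp.single v 1) = tw k qc qs w u v := by
  unfold twL
  rw [Finsupp.lift_apply, Finsupp.sum_single_index (by simp), one_smul,
    Finsupp.lift_apply, Finsupp.sum_single_index (by simp), one_smul]

lemma twL_single_left (u : List A) (Y : List A →₀ k) :
    twL k qc qs w (Finsupp.single u 1) Y = Y.sum fun v b => b • tw k qc qs w u v := by
  unfold twL
  rw [Finsupp.lift_apply, Finsupp.sum_single_index (by simp), one_smul,
    Finsupp.lift_apply]

lemma twL_apply_single (X : List A →₀ k) (v : List A) :
    twL k qc qs w X (Finsupp.single v 1) = X.sum fun u a => a • tw k qc qs w u v := by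
  unfold twL
  rw [Finsupp.lift_apply]
  rw [LinearMap.finsupp_sum_apply]
  apply Finsupp.sum_congr
  intro u _
  rw [LinearMap.smul_apply, Finsupp.lift_apply,
    Finsupp.sum_single_index (by simp), one_smul]

lemma twL_nil_left (Y : List A →₀ k) :
    twL k qc qs w (Finsupp.single [] 1) Y = Y := by
  rw [twL_single_left]
  conv_rhs => rw [← Finsupp.sum_single Y]
  apply Finsupp.sum_congr
  intro v _
  rw [tw_nil_left, Finsupp.smul_single_one]

lemma twL_nil_right (X : List A →₀ k) :
    twL k qc qs w X (Finsupp.single [] 1) = X := by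
  rw [twL_apply_single]
  conv_rhs => rw [← Finsupp.sum_single X]
  apply Finsupp.sum_congr
  intro v _
  rw [tw_nil_right, Finsupp.smul_single_one]

end StmtAux
namespace StmtAux
open Finsupp

/-! ### kappa and mu -/

/-- `kap C m = Σ_i C^i * m i`. -/
def kap (C : ℕ) (m : Mon) : ℕ := m.1.sum fun i v => C ^ i * v

def kapS (C : ℕ) (l : List Mon) : ℕ := (l.map (kap C)).sum

def mu (C : ℕ) : List Mon → ℕ
  | [] => 0
  | a :: t => kap C a + kapS C t + mu C t

lemma kap_mul (C : ℕ) (a b : Mon) : kap C (a * b) = kap C a + kap C b := by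
  unfold kap
  rw [Mon.mul_def]
  exact Finsupp.sum_add_index' (fun i => by simp) (fun i v v' => by ring)

lemma kap_Tmon (C p : ℕ) (m : Mon) : kap C (Mon.Tmon p m) = C ^ p * kap C m := by
  unfold kap
  rw [Tmon_def, Finsupp.sum_embDomain, Finsupp.mul_sum]
  apply Finsupp.sum_congr
  intro i _
  simp [Mon.addEmb, pow_add]
  change C ^ (i + p) * _ = _
  rw [pow_add]
  ring

lemma kap_le {C n : ℕ} (hC : 1 ≤ C) {m : Mon} (hm : ∀ i ∈ m.1.support, i ≤ n) :
    kap C m ≤ C ^ n * Mon.w m := by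
  unfold kap Mon.w
  rw [Finsupp.mul_sum]
  apply Finset.sum_le_sum
  intro i hi
  exact Nat.mul_le_mul_right _ (Nat.pow_le_pow_right hC (hm i hi))

lemma kap_ge {C n : ℕ} (hC : 1 ≤ C) {m : Mon} (hm : ∀ i ∈ m.1.support, n + 1 ≤ i) :
    C ^ (n + 1) ≤ kap C m := by
  obtain ⟨j, hj⟩ := support_nonempty m
  calc C ^ (n + 1) ≤ C ^ j * m.1 j := by
        have h1 : 1 ≤ m.1 j := Nat.one_le_iff_ne_zero.mpr (Finsupp.mem_support_iff.mp hj)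
        calc C ^ (n+1) ≤ C ^ j := Nat.pow_le_pow_right hC (hm j hj)
          _ = C ^ j * 1 := (Nat.mul_one _).symm
          _ ≤ C ^ j * m.1 j := Nat.mul_le_mul_left _ h1
    _ ≤ kap C m := Finset.single_le_sum (f := fun i => C ^ i * m.1 i) (fun _ _ => Nat.zero_le _) hj

lemma kap_pos {C : ℕ} (hC : 1 ≤ C) (m : Mon) : 1 ≤ kap C m := by
  have := kap_ge (n := 0) hC (m := m) (fun i hi => support_pos hi)
  calc 1 ≤ C ^ 1 := Nat.one_le_pow _ _ hC
    _ ≤ kap C m := this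

lemma kapS_nil (C : ℕ) : kapS C [] = 0 := rfl

lemma kapS_cons (C : ℕ) (a : Mon) (t : List Mon) :
    kapS C (a :: t) = kap C a + kapS C t := rfl

lemma kapS_append (C : ℕ) (s t : List Mon) :
    kapS C (s ++ t) = kapS C s + kapS C t := by unfold kapS; simp

lemma kapS_map_Tmon (C p : ℕ) (l : List Mon) :
    kapS C (l.map (Mon.Tmon p)) = C ^ p * kapS C l := by
  induction l with
  | nil => simp [kapS_nil]
  | cons a t ih => simp [kapS_cons, kap_Tmon, ih, Nat.mul_add]

lemma mu_nil (C : ℕ) : mu C [] = 0 := rfl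

lemma mu_cons (C : ℕ) (a : Mon) (t : List Mon) :
    mu C (a :: t) = kap C a + kapS C t + mu C t := rfl

lemma mu_append (C : ℕ) (s t : List Mon) :
    mu C (s ++ t) = mu C s + s.length * kapS C t + mu C t := by
  induction s with
  | nil => simp [mu_nil]
  | cons a s ih =>
      simp only [List.cons_append, mu_cons, ih, kapS_append, List.length_cons]
      ring

lemma mu_map_Tmon (C p : ℕ) (l : List Mon) :
    mu C (l.map (Mon.Tmon p)) = C ^ p * mu C l := by
  induction l with
  | nil => simp [mu_nil]
  | cons a t ih => simp [mu_cons, kap_Tmon, kapS_map_Tmon, ih, Nat.mul_add]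

/-! ### support destructuring helpers -/

lemma cons_injective (x : Mon) : Function.Injective (x :: · : List Mon → List Mon) :=
  fun s t h => by injection h

lemma mem_support_mapDomain_cons {k : Type*} [CommRing k] {x : Mon} {F : List Mon →₀ k}
    {z : List Mon} (hz : z ∈ (Finsupp.mapDomain (x :: ·) F).support) :
    ∃ t ∈ F.support, z = x :: t := by
  have := Finsupp.mapDomain_support hz
  rw [Finset.mem_image] at this
  obtain ⟨t, ht, hzt⟩ := this
  exact ⟨t, ht, hzt.symm⟩

/-! ### invariance of weight, kapS, alphabet under tw -/

lemma tw_supp_inv {k : Type*} [CommRing k] {qc qs : k} :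
    ∀ (n : ℕ) (u v z : List Mon), u.length + v.length ≤ n →
      z ∈ (tw k qc qs Mon.w u v).support →
      wl Mon.w z = wl Mon.w u + wl Mon.w v ∧
      (∀ C, kapS C z = kapS C u + kapS C v) ∧
      Mon.IndAlph z = Mon.IndAlph u ∪ Mon.IndAlph v := by
  intro n
  induction n with
  | zero =>
      intro u v z hlen hz
      have hu : u = [] := List.length_eq_zero_iff.mp (by omega)
      have hv : v = [] := List.length_eq_zero_iff.mp (by omega)
      subst hu; subst hv
      rw [tw_nil_right] at hz
      have : z = [] := Finset.mem_singleton.mp (Finsupp.support_single_subset hz)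
      subst this
      simp [IndAlph_nil, kapS_nil, wl_nil]
  | succ n ih =>
      intro u v z hlen hz
      match u, v with
      | u, [] =>
          rw [tw_nil_right] at hz
          have : z = u := Finset.mem_singleton.mp (Finsupp.support_single_subset hz)
          subst this
          simp [IndAlph_nil, kapS_nil, wl_nil]
      | [], b :: v =>
          rw [tw_nil_left] at hz
          have : z = b :: v := Finset.mem_singleton.mp (Finsupp.support_single_subset hz)
          subst this
          simp [IndAlph_nil, kapS_nil, wl_nil]
      | a :: u, b :: v =>
          rw [tw_cons_cons] at hz
          have hz' := Finsupp.support_add hz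
          rw [Finset.mem_union] at hz'
          rcases hz' with hz' | hz'
          · have hz'' := Finsupp.support_add hz'
            rw [Finset.mem_union] at hz''
            rcases hz'' with h1 | h2
            · -- branch 1 : z = a :: t, t ∈ supp(tw u (b::v))
              obtain ⟨t, ht, rfl⟩ := mem_support_mapDomain_cons h1
              obtain ⟨hw, hk, hal⟩ := ih u (b :: v) t (by simp at hlen ⊢; omega) ht
              refine ⟨?_, ?_, ?_⟩
              · simp only [wl_cons] at hw ⊢; omega
              · intro C; have := hk C; simp only [kapS_cons] at this ⊢; omega
              · simp only [IndAlph_cons, hal]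
                ext i; simp only [Finset.mem_union, IndAlph_cons]; tauto
            · -- branch 2 : z = b :: t, t ∈ supp(tw (a::u) v)
              have h2' := Finsupp.support_smul h2
              obtain ⟨t, ht, rfl⟩ := mem_support_mapDomain_cons h2'
              obtain ⟨hw, hk, hal⟩ := ih (a :: u) v t (by simp at hlen ⊢; omega) ht
              refine ⟨?_, ?_, ?_⟩
              · simp only [wl_cons] at hw ⊢; omega
              · intro C; have := hk C; simp only [kapS_cons] at this ⊢; omega
              · simp only [IndAlph_cons, hal]
                ext i; simp only [Finset.mem_union, IndAlph_cons]; tauto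
          · -- branch 3 : z = (a*b) :: t, t ∈ supp(tw u v)
            have h3' := Finsupp.support_smul hz'
            obtain ⟨t, ht, rfl⟩ := mem_support_mapDomain_cons h3'
            obtain ⟨hw, hk, hal⟩ := ih u v t (by simp at hlen ⊢; omega) ht
            refine ⟨?_, ?_, ?_⟩
            · simp only [wl_cons, w_mul] at hw ⊢; omega
            · intro C; have := hk C
              simp only [kapS_cons, kap_mul] at this ⊢; omega
            · simp only [IndAlph_cons, hal, support_mul]
              ext i; simp only [Finset.mem_union, IndAlph_cons]; tauto

/-! ### leading coefficient -/

lemma tw_coeff_concat {k : Type*} [CommRing k] {qc qs : k} {n : ℕ} :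
    ∀ (N : ℕ) (u v : List Mon), u.length + v.length ≤ N →
      (∀ i ∈ Mon.IndAlph u, i ≤ n) → (∀ j ∈ Mon.IndAlph v, n + 1 ≤ j) →
      (tw k qc qs Mon.w u v) (u ++ v) = 1 := by
  intro N
  induction N with
  | zero =>
      intro u v hlen _ _
      have hu : u = [] := List.length_eq_zero_iff.mp (by omega)
      have hv : v = [] := List.length_eq_zero_iff.mp (by omega)
      subst hu; subst hv
      rw [tw_nil_right]
      simp
  | succ N ih =>
      intro u v hlen hu hv
      match u, v with
      | u, [] =>
          rw [tw_nil_right]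
          simp
      | [], b :: v =>
          rw [tw_nil_left]
          simp
      | a :: u, b :: v =>
          have hab : a ≠ b := by
            intro h
            obtain ⟨i, hi⟩ := support_nonempty a
            have h1 : i ≤ n := hu i (by rw [IndAlph_cons]; exact Finset.mem_union_left _ hi)
            have h2 : n + 1 ≤ i := hv i (by
              rw [IndAlph_cons]; exact Finset.mem_union_left _ (h ▸ hi))
            omega
          have habm : a * b ≠ a := by
            intro h
            apply b.2.1
            have := congrArg Subtype.val h
            rw [Mon.mul_def] at this
            have : b.1 = 0 := by
              have h2 := congrArg (fun f => f - a.1) this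
              simpa using h2
            exact this
          rw [tw_cons_cons, Finsupp.add_apply, Finsupp.add_apply, Finsupp.smul_apply,
            Finsupp.smul_apply]
          have e1 : (Finsupp.mapDomain (a :: ·) (tw k qc qs Mon.w u (b :: v)))
              (a :: u ++ b :: v) = 1 := by
            rw [show (a :: u ++ b :: v) = (a :: ·) (u ++ b :: v) from rfl,
              Finsupp.mapDomain_apply (cons_injective a)]
            exact ih u (b :: v) (by simp at hlen ⊢; omega)
              (fun i hi => hu i (by rw [IndAlph_cons]; exact Finset.mem_union_right _ hi)) hv
          have e2 : (Finsupp.mapDomain (b :: ·) (tw k qc qs Mon.w (a :: u) v))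
              (a :: u ++ b :: v) = 0 := by
            apply Finsupp.mapDomain_notin_range
            rintro ⟨t, ht⟩
            have h : b = a := by injection ht
            exact hab h.symm
          have e3 : (Finsupp.mapDomain ((a * b) :: ·) (tw k qc qs Mon.w u v))
              (a :: u ++ b :: v) = 0 := by
            apply Finsupp.mapDomain_notin_range
            rintro ⟨t, ht⟩
            have h : a * b = a := by injection ht
            exact habm h
          rw [e1, e2, e3]
          simp

end StmtAux
namespace StmtAux
open Finsupp

lemma kapS_le {C n : ℕ} (hC : 1 ≤ C) {l : List Mon} (hl : ∀ i ∈ Mon.IndAlph l, i ≤ n) :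
    kapS C l ≤ C ^ n * wl Mon.w l := by
  induction l with
  | nil => simp [kapS_nil, wl_nil]
  | cons a t ih =>
      rw [kapS_cons, wl_cons, Nat.mul_add]
      have h1 : kap C a ≤ C ^ n * Mon.w a :=
        kap_le hC fun i hi => hl i (by rw [IndAlph_cons]; exact Finset.mem_union_left _ hi)
      have h2 : kapS C t ≤ C ^ n * wl Mon.w t :=
        ih fun i hi => hl i (by rw [IndAlph_cons]; exact Finset.mem_union_right _ hi)
      omega

/-- Triangularity of `tw` under index separation: every term is `≤` the concatenation
in the `mu` measure, with equality only for the concatenation itself. -/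
lemma tw_mu {k : Type*} [CommRing k] {qc qs : k} {n C : ℕ} (hC : 1 ≤ C) :
    ∀ (N : ℕ) (u v z : List Mon), u.length + v.length ≤ N →
      (∀ i ∈ Mon.IndAlph u, i ≤ n) → (∀ j ∈ Mon.IndAlph v, n + 1 ≤ j) →
      wl Mon.w u + wl Mon.w v < C →
      z ∈ (tw k qc qs Mon.w u v).support →
      mu C z ≤ mu C (u ++ v) ∧ (mu C z = mu C (u ++ v) → z = u ++ v) := by
  intro N
  induction N with
  | zero =>
      intro u v z hlen _ _ _ hz
      have hu : u = [] := List.length_eq_zero_iff.mp (by omega)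
      have hv : v = [] := List.length_eq_zero_iff.mp (by omega)
      subst hu; subst hv
      rw [tw_nil_right] at hz
      have : z = [] := Finset.mem_singleton.mp (Finsupp.support_single_subset hz)
      subst this
      exact ⟨le_refl _, fun _ => rfl⟩
  | succ N ih =>
      intro u v z hlen hu hv hW hz
      match u, v with
      | u, [] =>
          rw [tw_nil_right] at hz
          have : z = u := Finset.mem_singleton.mp (Finsupp.support_single_subset hz)
          subst this
          rw [List.append_nil]
          exact ⟨le_refl _, fun _ => rfl⟩
      | [], b :: v =>
          rw [tw_nil_left] at hz
          have : z = b :: v := Finset.mem_singleton.mp (Finsupp.support_single_subset hz)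
          subst this
          exact ⟨le_refl _, fun _ => rfl⟩
      | a :: u, b :: v =>
          -- common facts
          have hsepu : ∀ i ∈ Mon.IndAlph u, i ≤ n :=
            fun i hi => hu i (by rw [IndAlph_cons]; exact Finset.mem_union_right _ hi)
          have hsepv : ∀ j ∈ Mon.IndAlph v, n + 1 ≤ j :=
            fun j hj => hv j (by rw [IndAlph_cons]; exact Finset.mem_union_right _ hj)
          have hkb : C ^ (n + 1) ≤ kap C b :=
            kap_ge hC fun i hi =>
              hv i (by rw [IndAlph_cons]; exact Finset.mem_union_left _ hi)
          have hkau : kapS C (a :: u) < C ^ (n + 1) := by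
            have h1 : kapS C (a :: u) ≤ C ^ n * wl Mon.w (a :: u) := kapS_le hC hu
            have h2 : C ^ n * wl Mon.w (a :: u) < C ^ n * C :=
              mul_lt_mul_of_pos_left (by omega) (pow_pos (by omega) n)
            rw [← pow_succ] at h2
            omega
          have hkbpos : 1 ≤ kap C b := kap_pos hC b
          rw [tw_cons_cons] at hz
          have hz' := Finsupp.support_add hz
          rw [Finset.mem_union] at hz'
          rcases hz' with hz' | hz'
          · have hz'' := Finsupp.support_add hz'
            rw [Finset.mem_union] at hz''
            rcases hz'' with h1 | h2
            · -- branch 1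
              obtain ⟨t, ht, rfl⟩ := mem_support_mapDomain_cons h1
              obtain ⟨hle, heq⟩ := ih u (b :: v) t (by simp at hlen ⊢; omega)
                hsepu hv (by simp only [wl_cons] at hW ⊢; omega) ht
              obtain ⟨-, hk, -⟩ := tw_supp_inv (u.length + (b :: v).length) u (b :: v) t
                (le_refl _) ht
              have hkt : kapS C t = kapS C (u ++ b :: v) := by
                rw [hk C, kapS_append]
              have e0 : mu C (a :: t) = kap C a + kapS C (u ++ b :: v) + mu C t := by
                rw [mu_cons, hkt]
              have e0' : mu C (a :: u ++ b :: v)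
                  = kap C a + kapS C (u ++ b :: v) + mu C (u ++ b :: v) := mu_cons _ _ _
              constructor
              · rw [e0, e0']; omega
              · intro hmu
                rw [e0, e0'] at hmu
                have : mu C t = mu C (u ++ b :: v) := by omega
                show a :: t = a :: (u ++ b :: v)
                rw [heq this]
            · -- branch 2 : strictly smaller
              have h2' := Finsupp.support_smul h2
              obtain ⟨t, ht, rfl⟩ := mem_support_mapDomain_cons h2'
              obtain ⟨hle, -⟩ := ih (a :: u) v t (by simp at hlen ⊢; omega)
                hu hsepv (by simp only [wl_cons] at hW ⊢; omega) ht
              obtain ⟨-, hk, -⟩ := tw_supp_inv ((a :: u).length + v.length) (a :: u) v t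
                (le_refl _) ht
              have e1 : mu C ((a :: u) ++ b :: v)
                  = kap C a + kapS C u + mu C u
                    + ((u.length + 1) * kap C b + (u.length + 1) * kapS C v)
                    + (kap C b + kapS C v + mu C v) := by
                simp only [mu_append, mu_cons, kapS_cons, List.length_cons]
                all_goals ring
              have e2 : mu C ((a :: u) ++ v)
                  = kap C a + kapS C u + mu C u + (u.length + 1) * kapS C v + mu C v := by
                simp only [mu_append, mu_cons, List.length_cons]
                all_goals ring
              have e3 : mu C (b :: t)
                  = kap C b + (kap C a + kapS C u + kapS C v) + mu C t := by
                rw [mu_cons, hk C, kapS_cons]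
                all_goals ring
              have hP : (u.length + 1) * kap C b = u.length * kap C b + kap C b := by ring
              have hQ : (u.length + 1) * kapS C v = u.length * kapS C v + kapS C v := by
                ring
              have hab2 : kap C a + kapS C u < kap C b := by
                rw [kapS_cons] at hkau
                omega
              have hstrict : mu C (b :: t) < mu C ((a :: u) ++ b :: v) := by omega
              exact ⟨le_of_lt hstrict, fun h => absurd h (Nat.ne_of_lt hstrict)⟩
          · -- branch 3 : strictly smaller
            have h3' := Finsupp.support_smul hz'
            obtain ⟨t, ht, rfl⟩ := mem_support_mapDomain_cons h3'
            obtain ⟨hle, -⟩ := ih u v t (by simp at hlen ⊢; omega)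
              hsepu hsepv (by simp only [wl_cons] at hW ⊢; omega) ht
            obtain ⟨-, hk, -⟩ := tw_supp_inv (u.length + v.length) u v t (le_refl _) ht
            have e1 : mu C ((a :: u) ++ b :: v)
                = kap C a + kapS C u + mu C u
                  + ((u.length + 1) * kap C b + (u.length + 1) * kapS C v)
                  + (kap C b + kapS C v + mu C v) := by
              simp only [mu_append, mu_cons, kapS_cons, List.length_cons]
              all_goals ring
            have e2 : mu C (u ++ v) = mu C u + u.length * kapS C v + mu C v :=
              mu_append _ _ _
            have e3 : mu C ((a * b) :: t)
                = kap C a + kap C b + (kapS C u + kapS C v) + mu C t := by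
              rw [mu_cons, hk C, kap_mul]
              all_goals ring
            have hP : (u.length + 1) * kap C b = u.length * kap C b + kap C b := by ring
            have hQ : (u.length + 1) * kapS C v = u.length * kapS C v + kapS C v := by ring
            have hstrict : mu C ((a * b) :: t) < mu C ((a :: u) ++ b :: v) := by omega
            exact ⟨le_of_lt hstrict, fun h => absurd h (Nat.ne_of_lt hstrict)⟩

end StmtAux
namespace StmtAux
open Finsupp

lemma wl_map_Tmon (p : ℕ) (l : List Mon) :
    wl Mon.w (l.map (Mon.Tmon p)) = wl Mon.w l := by
  induction l with
  | nil => rfl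
  | cons a t ih => rw [List.map_cons, wl_cons, wl_cons, w_Tmon, ih]

/-- The shift operator commutes with the twisted law. -/
lemma tw_equivariant {k : Type*} [CommRing k] {qc qs : k} (p : ℕ) :
    ∀ (N : ℕ) (u v : List Mon), u.length + v.length ≤ N →
      Finsupp.mapDomain (List.map (Mon.Tmon p)) (tw k qc qs Mon.w u v)
        = tw k qc qs Mon.w (u.map (Mon.Tmon p)) (v.map (Mon.Tmon p)) := by
  intro N
  induction N with
  | zero =>
      intro u v hlen
      have hu : u = [] := List.length_eq_zero_iff.mp (by omega)
      have hv : v = [] := List.length_eq_zero_iff.mp (by omega)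
      subst hu; subst hv
      rw [tw_nil_right, Finsupp.mapDomain_single, List.map_nil, tw_nil_right]
  | succ N ih =>
      intro u v hlen
      match u, v with
      | u, [] =>
          rw [tw_nil_right, Finsupp.mapDomain_single, List.map_nil, tw_nil_right]
      | [], b :: v =>
          rw [tw_nil_left, Finsupp.mapDomain_single, List.map_nil, tw_nil_left]
      | a :: u, b :: v =>
          have swap : ∀ (x : Mon) (F : List Mon →₀ k),
              Finsupp.mapDomain (List.map (Mon.Tmon p)) (Finsupp.mapDomain (x :: ·) F)
                = Finsupp.mapDomain (Mon.Tmon p x :: ·)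
                    (Finsupp.mapDomain (List.map (Mon.Tmon p)) F) := by
            intro x F
            rw [← Finsupp.mapDomain_comp, ← Finsupp.mapDomain_comp]
            congr 1
          rw [tw_cons_cons, Finsupp.mapDomain_add, Finsupp.mapDomain_add,
            Finsupp.mapDomain_smul, Finsupp.mapDomain_smul,
            swap a, swap b, swap (a * b),
            ih u (b :: v) (by simp at hlen ⊢; omega),
            ih (a :: u) v (by simp at hlen ⊢; omega),
            ih u v (by simp at hlen ⊢; omega)]
          rw [List.map_cons, List.map_cons, tw_cons_cons, ← Tmon_mul]
          simp only [w_Tmon, ← List.map_cons, wl_map_Tmon]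

/-- Key expansion lemma 1 : `(x :: F) ↑ (c :: z)` for `F` of constant weight `Wf`. -/
lemma key1 {k : Type*} [CommRing k] {qc qs : k} {x : Mon} {F : List Mon →₀ k} {c : Mon}
    {z : List Mon} {Wf : ℕ} (hF : ∀ t ∈ F.support, wl Mon.w t = Wf) :
    twL k qc qs Mon.w (Finsupp.mapDomain (x :: ·) F) (Finsupp.single (c :: z) 1)
      = Finsupp.mapDomain (x :: ·) (twL k qc qs Mon.w F (Finsupp.single (c :: z) 1))
        + qc ^ ((Mon.w x + Wf) * Mon.w c) • Finsupp.mapDomain (c :: ·)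
            (twL k qc qs Mon.w (Finsupp.mapDomain (x :: ·) F) (Finsupp.single z 1))
        + (qc ^ (Wf * Mon.w c) * qs ^ (Mon.w x * Mon.w c)) •
            Finsupp.mapDomain ((x * c) :: ·)
              (twL k qc qs Mon.w F (Finsupp.single z 1)) := by
  rw [twL_apply_single, twL_apply_single, twL_apply_single, twL_apply_single,
    Finsupp.sum_mapDomain_index (fun t => by simp) (fun t a a' => add_smul a a' _),
    Finsupp.sum_mapDomain_index (fun t => by simp) (fun t a a' => add_smul a a' _)]
  rw [Finsupp.mapDomain_sum, Finsupp.mapDomain_sum, Finsupp.mapDomain_sum,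
    Finsupp.smul_sum, Finsupp.smul_sum]
  rw [← Finsupp.sum_add, ← Finsupp.sum_add]
  apply Finsupp.sum_congr
  intro t ht
  rw [tw_cons_cons, wl_cons, hF t ht, smul_add, smul_add,
    Finsupp.mapDomain_smul, Finsupp.mapDomain_smul, Finsupp.mapDomain_smul]
  congr 1
  · congr 1
    · rw [smul_comm]
  · rw [smul_comm]

/-- Key expansion lemma 2 : `(a :: u) ↑ (y :: G)`. -/
lemma key2 {k : Type*} [CommRing k] {qc qs : k} {a : Mon} {u : List Mon} {y : Mon}
    {G : List Mon →₀ k} :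
    twL k qc qs Mon.w (Finsupp.single (a :: u) 1) (Finsupp.mapDomain (y :: ·) G)
      = Finsupp.mapDomain (a :: ·)
          (twL k qc qs Mon.w (Finsupp.single u 1) (Finsupp.mapDomain (y :: ·) G))
        + qc ^ (wl Mon.w (a :: u) * Mon.w y) • Finsupp.mapDomain (y :: ·)
            (twL k qc qs Mon.w (Finsupp.single (a :: u) 1) G)
        + (qc ^ (wl Mon.w u * Mon.w y) * qs ^ (Mon.w a * Mon.w y)) •
            Finsupp.mapDomain ((a * y) :: ·)
              (twL k qc qs Mon.w (Finsupp.single u 1) G) := by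
  rw [twL_single_left, twL_single_left, twL_single_left, twL_single_left,
    Finsupp.sum_mapDomain_index (fun t => by simp) (fun t b b' => add_smul b b' _),
    Finsupp.sum_mapDomain_index (fun t => by simp) (fun t b b' => add_smul b b' _)]
  rw [Finsupp.mapDomain_sum, Finsupp.mapDomain_sum, Finsupp.mapDomain_sum,
    Finsupp.smul_sum, Finsupp.smul_sum]
  rw [← Finsupp.sum_add, ← Finsupp.sum_add]
  apply Finsupp.sum_congr
  intro s _
  rw [tw_cons_cons, smul_add, smul_add,
    Finsupp.mapDomain_smul, Finsupp.mapDomain_smul, Finsupp.mapDomain_smul]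
  congr 1
  · congr 1
    · rw [smul_comm]
  · rw [smul_comm]

end StmtAux
namespace StmtAux
open Finsupp

lemma mon_mul_assoc (a b c : Mon) : a * b * c = a * (b * c) := by
  apply Subtype.ext
  rw [Mon.mul_def, Mon.mul_def, Mon.mul_def, Mon.mul_def]
  exact add_assoc _ _ _

/-- Associativity of the twisted law on basis elements. -/
lemma tw_assoc_single {k : Type*} [CommRing k] {qc qs : k} :
    ∀ (N : ℕ) (u v z : List Mon), u.length + v.length + z.length ≤ N →
      twL k qc qs Mon.w (tw k qc qs Mon.w u v) (Finsupp.single z 1)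
        = twL k qc qs Mon.w (Finsupp.single u 1) (tw k qc qs Mon.w v z) := by
  intro N
  induction N with
  | zero =>
      intro u v z hlen
      have hu : u = [] := List.length_eq_zero_iff.mp (by omega)
      have hv : v = [] := List.length_eq_zero_iff.mp (by omega)
      have hz : z = [] := List.length_eq_zero_iff.mp (by omega)
      subst hu; subst hv; subst hz
      rw [tw_nil_right]
  | succ N ih =>
      intro u v z hlen
      match u, v, z with
      | u, [], z =>
          rw [tw_nil_right, tw_nil_left]
      | u, b :: v, [] =>
          rw [twL_nil_right, tw_nil_right, twL_single_single]
      | [], b :: v, c :: z =>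
          rw [tw_nil_left, twL_nil_left, twL_single_single]
      | a :: u, b :: v, c :: z =>
          have IH1 := ih u (b :: v) (c :: z) (by simp only [List.length_cons] at hlen ⊢; omega)
          have IH2 := ih (a :: u) (b :: v) z (by simp only [List.length_cons] at hlen ⊢; omega)
          have IH3 := ih u (b :: v) z (by simp only [List.length_cons] at hlen ⊢; omega)
          have IH4 := ih (a :: u) v (c :: z) (by simp only [List.length_cons] at hlen ⊢; omega)
          have IH5 := ih u v (c :: z) (by simp only [List.length_cons] at hlen ⊢; omega)
          have IH6 := ih (a :: u) v z (by simp only [List.length_cons] at hlen ⊢; omega)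
          have IH7 := ih u v z (by simp only [List.length_cons] at hlen ⊢; omega)
          have hF1 : ∀ t ∈ (tw k qc qs Mon.w u (b :: v)).support,
              wl Mon.w t = wl Mon.w u + wl Mon.w (b :: v) :=
            fun t ht => (tw_supp_inv _ u (b :: v) t le_rfl ht).1
          have hF2 : ∀ t ∈ (tw k qc qs Mon.w (a :: u) v).support,
              wl Mon.w t = wl Mon.w (a :: u) + wl Mon.w v :=
            fun t ht => (tw_supp_inv _ (a :: u) v t le_rfl ht).1
          have hF3 : ∀ t ∈ (tw k qc qs Mon.w u v).support,
              wl Mon.w t = wl Mon.w u + wl Mon.w v :=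
            fun t ht => (tw_supp_inv _ u v t le_rfl ht).1
          -- expand the left-hand side
          rw [tw_cons_cons qc qs Mon.w a b u v]
          rw [map_add, map_add, LinearMap.add_apply, LinearMap.add_apply,
            map_smul, map_smul, LinearMap.smul_apply, LinearMap.smul_apply]
          rw [key1 hF1, key1 hF2, key1 hF3]
          rw [IH1, IH3, IH4, IH6, IH5, IH7]
          -- expand tw (b::v) (c::z) everywhere (inside lhs atom and on the rhs)
          rw [tw_cons_cons qc qs Mon.w b c v z]
          simp only [map_add, map_smul, LinearMap.add_apply, LinearMap.smul_apply,
            Finsupp.mapDomain_add, Finsupp.mapDomain_smul, smul_add]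
          -- expand the right-hand side products via key2
          rw [key2 (a := a) (u := u) (y := b) (G := tw k qc qs Mon.w v (c :: z)),
            key2 (a := a) (u := u) (y := c) (G := tw k qc qs Mon.w (b :: v) z),
            key2 (a := a) (u := u) (y := b * c) (G := tw k qc qs Mon.w v z)]
          -- fold the middle term back and re-expand
          rw [← IH2]
          rw [tw_cons_cons qc qs Mon.w a b u v]
          simp only [map_add, map_smul, LinearMap.add_apply, LinearMap.smul_apply,
            Finsupp.mapDomain_add, Finsupp.mapDomain_smul, smul_add]
          simp only [wl_cons, w_mul, mon_mul_assoc]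
          match_scalars <;> ring
end StmtAux
namespace StmtAux
open Finsupp

variable {k : Type*} [CommRing k] {qc qs : k}

/-! ### twbarL computation lemmas -/

lemma twbarL_single_single (u v : List Mon) :
    twbarL k qc qs (Finsupp.single u 1) (Finsupp.single v 1) = twbar k qc qs u v := by
  unfold twbarL
  rw [Finsupp.lift_apply, Finsupp.sum_single_index (by simp), one_smul,
    Finsupp.lift_apply, Finsupp.sum_single_index (by simp), one_smul]

lemma twbarL_single_left (u : List Mon) (Y : FreeL k) :
    twbarL k qc qs (Finsupp.single u 1) Y = Y.sum fun v b => b • twbar k qc qs u v := by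
  unfold twbarL
  rw [Finsupp.lift_apply, Finsupp.sum_single_index (by simp), one_smul,
    Finsupp.lift_apply]

lemma twbarL_apply_single (X : FreeL k) (v : List Mon) :
    twbarL k qc qs X (Finsupp.single v 1) = X.sum fun u a => a • twbar k qc qs u v := by
  unfold twbarL
  rw [Finsupp.lift_apply]
  rw [LinearMap.finsupp_sum_apply]
  apply Finsupp.sum_congr
  intro u _
  rw [LinearMap.smul_apply, Finsupp.lift_apply,
    Finsupp.sum_single_index (by simp), one_smul]

lemma twbar_nil_left (v : List Mon) :
    twbar k qc qs [] v = Finsupp.single v 1 := by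
  unfold twbar
  rw [show Mon.maxInd [] = 0 from by simp [Mon.maxInd, IndAlph_nil],
    show Mon.Tmon 0 = id from funext Tmon_zero, List.map_id, tw_nil_left]

lemma twbar_nil_right (u : List Mon) :
    twbar k qc qs u [] = Finsupp.single u 1 := by
  unfold twbar
  rw [List.map_nil, tw_nil_right]

lemma twbarL_nil_left (Y : FreeL k) :
    twbarL k qc qs (Finsupp.single [] 1) Y = Y := by
  rw [twbarL_single_left]
  conv_rhs => rw [← Finsupp.sum_single Y]
  apply Finsupp.sum_congr
  intro v _
  rw [twbar_nil_left, Finsupp.smul_single_one]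

lemma twbarL_nil_right (X : FreeL k) :
    twbarL k qc qs X (Finsupp.single [] 1) = X := by
  rw [twbarL_apply_single]
  conv_rhs => rw [← Finsupp.sum_single X]
  apply Finsupp.sum_congr
  intro v _
  rw [twbar_nil_right, Finsupp.smul_single_one]

/-! ### associativity of the deformed shifted law -/

lemma maxInd_of_mem_supp_twbar {u v t : List Mon}
    (ht : t ∈ (twbar k qc qs u v).support) :
    Mon.maxInd t = Mon.maxInd u + Mon.maxInd v := by
  unfold twbar at ht
  obtain ⟨-, -, hal⟩ := tw_supp_inv _ u (v.map (Mon.Tmon (Mon.maxInd u))) t le_rfl ht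
  have : Mon.IndAlph t = Mon.IndAlph (Mon.sconc u v) := by
    rw [hal, IndAlph_sconc, IndAlph_map_Tmon]
  show (Mon.IndAlph t).sup id = _
  rw [this]
  exact maxInd_sconc u v

lemma twbar_assoc_single (u v z : List Mon) :
    twbarL k qc qs (twbar k qc qs u v) (Finsupp.single z 1)
      = twbarL k qc qs (Finsupp.single u 1) (twbar k qc qs v z) := by
  rw [twbarL_apply_single]
  have step1 : ((twbar k qc qs u v).sum fun t a => a • twbar k qc qs t z)
      = (twbar k qc qs u v).sum fun t a =>
          a • tw k qc qs Mon.w t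
            (z.map (Mon.Tmon (Mon.maxInd u + Mon.maxInd v))) := by
    apply Finsupp.sum_congr
    intro t ht
    rw [show twbar k qc qs t z
        = tw k qc qs Mon.w t (z.map (Mon.Tmon (Mon.maxInd t))) from rfl,
      maxInd_of_mem_supp_twbar ht]
  rw [step1]
  rw [show twbar k qc qs u v
      = tw k qc qs Mon.w u (v.map (Mon.Tmon (Mon.maxInd u))) from rfl]
  rw [← twL_apply_single qc qs Mon.w
    (tw k qc qs Mon.w u (v.map (Mon.Tmon (Mon.maxInd u))))
    (z.map (Mon.Tmon (Mon.maxInd u + Mon.maxInd v)))]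
  have step2 := tw_assoc_single (k := k) (qc := qc) (qs := qs)
    (u.length + (v.map (Mon.Tmon (Mon.maxInd u))).length
      + (z.map (Mon.Tmon (Mon.maxInd u + Mon.maxInd v))).length)
    u (v.map (Mon.Tmon (Mon.maxInd u)))
    (z.map (Mon.Tmon (Mon.maxInd u + Mon.maxInd v))) le_rfl
  rw [step2]
  -- now identify tw (shift v) (shift z) with the mapDomain image
  have equi := tw_equivariant (k := k) (qc := qc) (qs := qs) (Mon.maxInd u)
    (v.length + (z.map (Mon.Tmon (Mon.maxInd v))).length)
    v (z.map (Mon.Tmon (Mon.maxInd v))) le_rfl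
  have comp : (z.map (Mon.Tmon (Mon.maxInd v))).map (Mon.Tmon (Mon.maxInd u))
      = z.map (Mon.Tmon (Mon.maxInd u + Mon.maxInd v)) := by
    rw [List.map_map]
    apply List.map_congr_left
    intro m _
    rw [Function.comp_apply, Tmon_comp, Nat.add_comm]
  rw [comp] at equi
  rw [← equi]
  -- right-hand side
  rw [twbarL_single_left, twL_single_left]
  rw [show twbar k qc qs v z
      = tw k qc qs Mon.w v (z.map (Mon.Tmon (Mon.maxInd v))) from rfl]
  rw [Finsupp.sum_mapDomain_index (fun t => by simp) (fun t b b' => add_smul b b' _)]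
  rfl

/-- Full associativity of `twbarL`. -/
lemma twbarL_assoc (x y Z : FreeL k) :
    twbarL k qc qs (twbarL k qc qs x y) Z
      = twbarL k qc qs x (twbarL k qc qs y Z) := by
  induction x using Finsupp.induction_linear with
  | zero => simp only [LinearMap.map_zero, map_zero, LinearMap.zero_apply]
  | add f g hf hg => simp only [LinearMap.map_add, map_add, LinearMap.add_apply, hf, hg]
  | single a c =>
      rw [← Finsupp.smul_single_one a c]
      simp only [map_smul, LinearMap.smul_apply]
      congr 1
      induction y using Finsupp.induction_linear with
      | zero => simp only [LinearMap.map_zero, map_zero, LinearMap.zero_apply]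
      | add f g hf hg => simp only [LinearMap.map_add, map_add, LinearMap.add_apply, hf, hg]
      | single b c' =>
          rw [← Finsupp.smul_single_one b c']
          simp only [map_smul, LinearMap.smul_apply]
          congr 1
          induction Z using Finsupp.induction_linear with
          | zero => simp only [LinearMap.map_zero, map_zero, LinearMap.zero_apply]
          | add f g hf hg => simp only [LinearMap.map_add, map_add, LinearMap.add_apply, hf, hg]
          | single z c'' =>
              rw [← Finsupp.smul_single_one z c'']
              simp only [map_smul, LinearMap.smul_apply]
              congr 1
              rw [twbarL_single_single a b, twbarL_single_single b z]
              exact twbar_assoc_single a b z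

end StmtAux
namespace StmtAux
open Finsupp

/-! ### sconc statistics -/

lemma wl_sconc (u v : List Mon) :
    wl Mon.w (Mon.sconc u v) = wl Mon.w u + wl Mon.w v := by
  unfold Mon.sconc
  rw [wl_append, wl_map_Tmon]

lemma kapS_sconc (C : ℕ) (u v : List Mon) :
    kapS C (Mon.sconc u v) = kapS C u + C ^ (Mon.maxInd u) * kapS C v := by
  unfold Mon.sconc
  rw [kapS_append, kapS_map_Tmon]

lemma mu_sconc (C : ℕ) (u v : List Mon) :
    mu C (Mon.sconc u v)
      = mu C u + u.length * (C ^ (Mon.maxInd u) * kapS C v)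
        + C ^ (Mon.maxInd u) * mu C v := by
  unfold Mon.sconc
  rw [mu_append, kapS_map_Tmon, mu_map_Tmon]

/-! ### triangularity of twbar -/

lemma twbar_tri {k : Type*} [CommRing k] {qc qs : k} {C : ℕ} (hC : 1 ≤ C)
    (f z : List Mon) (hW : wl Mon.w f + wl Mon.w z < C) :
    (∀ y ∈ (twbar k qc qs f z).support,
        wl Mon.w y = wl Mon.w (Mon.sconc f z) ∧
        kapS C y = kapS C (Mon.sconc f z) ∧
        Mon.IndAlph y = Mon.IndAlph (Mon.sconc f z) ∧
        mu C y ≤ mu C (Mon.sconc f z) ∧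
        (mu C y = mu C (Mon.sconc f z) → y = Mon.sconc f z)) ∧
    (twbar k qc qs f z) (Mon.sconc f z) = 1 := by
  set zs := z.map (Mon.Tmon (Mon.maxInd f)) with hzs
  have hsconc : Mon.sconc f z = f ++ zs := rfl
  have htb : twbar k qc qs f z = tw k qc qs Mon.w f zs := rfl
  have hsepu : ∀ i ∈ Mon.IndAlph f, i ≤ Mon.maxInd f := fun i hi => le_maxInd hi
  have hsepv : ∀ j ∈ Mon.IndAlph zs, Mon.maxInd f + 1 ≤ j := by
    intro j hj
    rw [hzs, IndAlph_map_Tmon, Finset.mem_map] at hj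
    obtain ⟨i, hi, rfl⟩ := hj
    have := mem_IndAlph_pos hi
    simp [addEmb_apply']
    omega
  have hWz : wl Mon.w f + wl Mon.w zs < C := by rw [hzs, wl_map_Tmon]; exact hW
  constructor
  · intro y hy
    rw [htb] at hy
    obtain ⟨h1, h2, h3⟩ := tw_supp_inv (f.length + zs.length) f zs y le_rfl hy
    obtain ⟨h4, h5⟩ := tw_mu hC (f.length + zs.length) f zs y le_rfl hsepu hsepv hWz hy
    rw [hsconc]
    exact ⟨by rw [h1, wl_append], by rw [h2 C, kapS_append],
      by rw [h3, IndAlph_append], h4, h5⟩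
  · rw [htb, hsconc]
    exact tw_coeff_concat (f.length + zs.length) f zs le_rfl hsepu hsepv

/-! ### the product of a factorization -/

noncomputable def Pp (k : Type*) [CommRing k] (qc qs : k) (fs : List (List Mon)) : FreeL k :=
  (fs.map fun x => Finsupp.single x 1).foldr (fun a b => twbarL k qc qs a b)
    (Finsupp.single [] 1)

lemma Pp_nil {k : Type*} [CommRing k] {qc qs : k} :
    Pp k qc qs [] = Finsupp.single [] 1 := rfl

lemma Pp_cons {k : Type*} [CommRing k] {qc qs : k} (f : List Mon) (fs : List (List Mon)) :
    Pp k qc qs (f :: fs) = twbarL k qc qs (Finsupp.single f 1) (Pp k qc qs fs) := rfl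

lemma Pp_append {k : Type*} [CommRing k] {qc qs : k} (fs gs : List (List Mon)) :
    Pp k qc qs (fs ++ gs) = twbarL k qc qs (Pp k qc qs fs) (Pp k qc qs gs) := by
  induction fs with
  | nil => rw [List.nil_append, Pp_nil, twbarL_nil_left]
  | cons f fs ih =>
      rw [List.cons_append, Pp_cons, ih, Pp_cons, ← twbarL_assoc]

/-! ### foldr of sconc -/

lemma foldr_sconc_acc (fs : List (List Mon)) (v : List Mon) :
    fs.foldr Mon.sconc v = Mon.sconc (fs.foldr Mon.sconc []) v := by
  induction fs with
  | nil => rw [List.foldr_nil, List.foldr_nil, sconc_nil_left]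
  | cons f fs ih =>
      rw [List.foldr_cons, List.foldr_cons, ih, sconc_assoc]

lemma foldr_sconc_append (fs gs : List (List Mon)) :
    (fs ++ gs).foldr Mon.sconc []
      = Mon.sconc (fs.foldr Mon.sconc []) (gs.foldr Mon.sconc []) := by
  rw [List.foldr_append, foldr_sconc_acc]

/-! ### existence of factorizations -/

lemma exists_factorization :
    ∀ (n : ℕ) (l : List Mon), l.length ≤ n → l ≠ [] →
      ∃ fs : List (List Mon), (∀ x ∈ fs, Mon.SIrred x) ∧ fs.foldr Mon.sconc [] = l := by
  intro n
  induction n with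
  | zero =>
      intro l hlen hl
      exact absurd (List.length_eq_zero_iff.mp (by omega)) hl
  | succ n ih =>
      intro l hlen hl
      by_cases hirr : Mon.SIrred l
      · refine ⟨[l], by simpa using hirr, ?_⟩
        rw [List.foldr_cons, List.foldr_nil, sconc_nil_right]
      · unfold Mon.SIrred at hirr
        push_neg at hirr
        obtain ⟨u, v, huv, hune, hvne⟩ := hirr hl
        rw [huv, sconc_length] at hlen
        have hlu : u.length ≤ n := by
          have hv1 : 1 ≤ v.length := by
            cases v with
            | nil => exact absurd rfl hvne
            | cons _ _ => simp
          omega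
        have hlv : v.length ≤ n := by
          have hu1 : 1 ≤ u.length := by
            cases u with
            | nil => exact absurd rfl hune
            | cons _ _ => simp
          omega
        obtain ⟨fsu, hfsu, hfsu2⟩ := ih u hlu hune
        obtain ⟨fsv, hfsv, hfsv2⟩ := ih v hlv hvne
        refine ⟨fsu ++ fsv, ?_, ?_⟩
        · intro x hx
          rcases List.mem_append.mp hx with h | h
          · exact hfsu x h
          · exact hfsv x h
        · rw [foldr_sconc_append, hfsu2, hfsv2, huv]

/-! ### triangularity of Pp -/

lemma Pp_tri {k : Type*} [CommRing k] {qc qs : k} {C : ℕ} (hC : 1 ≤ C) :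
    ∀ (fs : List (List Mon)), wl Mon.w (fs.foldr Mon.sconc []) < C →
      (∀ z ∈ (Pp k qc qs fs).support,
          wl Mon.w z = wl Mon.w (fs.foldr Mon.sconc []) ∧
          kapS C z = kapS C (fs.foldr Mon.sconc []) ∧
          Mon.IndAlph z = Mon.IndAlph (fs.foldr Mon.sconc []) ∧
          mu C z ≤ mu C (fs.foldr Mon.sconc []) ∧
          (mu C z = mu C (fs.foldr Mon.sconc []) → z = fs.foldr Mon.sconc [])) ∧
      (Pp k qc qs fs) (fs.foldr Mon.sconc []) = 1 := by
  intro fs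
  induction fs with
  | nil =>
      intro _
      constructor
      · intro z hz
        have : z = [] := Finset.mem_singleton.mp (Finsupp.support_single_subset hz)
        subst this
        exact ⟨rfl, rfl, rfl, le_refl _, fun _ => rfl⟩
      · simp [Pp_nil]
  | cons f fs ih =>
      intro hWC
      set m' := fs.foldr Mon.sconc [] with hm'
      have hfold : (f :: fs).foldr Mon.sconc [] = Mon.sconc f m' := by
        rw [List.foldr_cons]
      rw [hfold] at hWC ⊢
      have hWm : wl Mon.w f + wl Mon.w m' < C := by rw [← wl_sconc]; exact hWC
      have hWC' : wl Mon.w m' < C := by omega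
      obtain ⟨ihsupp, ihcoeff⟩ := ih hWC'
      have hCn : 1 ≤ C ^ (Mon.maxInd f) := Nat.one_le_pow _ _ (by omega)
      -- comparison of sconc f z with sconc f m' for z in the support of Pp fs
      have hcomp : ∀ z ∈ (Pp k qc qs fs).support,
          wl Mon.w (Mon.sconc f z) = wl Mon.w (Mon.sconc f m') ∧
          kapS C (Mon.sconc f z) = kapS C (Mon.sconc f m') ∧
          Mon.IndAlph (Mon.sconc f z) = Mon.IndAlph (Mon.sconc f m') ∧
          mu C (Mon.sconc f z) ≤ mu C (Mon.sconc f m') ∧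
          (mu C (Mon.sconc f z) = mu C (Mon.sconc f m') → z = m') := by
        intro z hz
        obtain ⟨h1, h2, h3, h4, h5⟩ := ihsupp z hz
        refine ⟨by rw [wl_sconc, wl_sconc, h1], by rw [kapS_sconc, kapS_sconc, h2],
          by rw [IndAlph_sconc, IndAlph_sconc, h3], ?_, ?_⟩
        · rw [mu_sconc, mu_sconc, h2]
          have : C ^ (Mon.maxInd f) * mu C z ≤ C ^ (Mon.maxInd f) * mu C m' :=
            Nat.mul_le_mul_left _ h4
          omega
        · intro h
          rw [mu_sconc, mu_sconc, h2] at h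
          have : mu C z = mu C m' := by
            have := Nat.eq_of_mul_eq_mul_left (show 0 < C ^ (Mon.maxInd f) by omega)
              (show C ^ (Mon.maxInd f) * mu C z = C ^ (Mon.maxInd f) * mu C m' by omega)
            exact this
          exact h5 this
      have expand : Pp k qc qs (f :: fs)
          = (Pp k qc qs fs).sum fun z c => c • twbar k qc qs f z := by
        rw [Pp_cons, twbarL_single_left]
      constructor
      · intro y hy
        rw [expand] at hy
        have := Finsupp.support_sum hy
        rw [Finset.mem_biUnion] at this
        obtain ⟨z, hz, hyz⟩ := this
        have hyz' : y ∈ (twbar k qc qs f z).support := Finsupp.support_smul hyz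
        obtain ⟨h1, h2, h3, h4, h5⟩ := hcomp z hz
        have hWz : wl Mon.w f + wl Mon.w z < C := by
          obtain ⟨hz1, -⟩ := ihsupp z hz
          omega
        obtain ⟨htri, -⟩ := twbar_tri (k := k) (qc := qc) (qs := qs) hC f z hWz
        obtain ⟨g1, g2, g3, g4, g5⟩ := htri y hyz'
        refine ⟨by rw [g1, h1], by rw [g2, h2], by rw [g3, h3], le_trans g4 h4, ?_⟩
        intro heq
        have e4 : mu C (Mon.sconc f z) = mu C (Mon.sconc f m') := by omega
        have e5 : mu C y = mu C (Mon.sconc f z) := by omega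
        rw [g5 e5, h5 e4]
      · rw [expand, Finsupp.sum_apply]
        unfold Finsupp.sum
        refine Eq.trans (Finset.sum_eq_single m' (fun z hz hzneq => ?_) (fun hm => ?_)) ?_
        · show ((Pp k qc qs fs) z • twbar k qc qs f z) (Mon.sconc f m') = 0
          rw [Finsupp.smul_apply]
          have : (twbar k qc qs f z) (Mon.sconc f m') = 0 := by
            by_contra hne
            have hmem : Mon.sconc f m' ∈ (twbar k qc qs f z).support :=
              Finsupp.mem_support_iff.mpr hne
            have hWz : wl Mon.w f + wl Mon.w z < C := by
              obtain ⟨hz1, -⟩ := ihsupp z hz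
              omega
            obtain ⟨htri, -⟩ := twbar_tri (k := k) (qc := qc) (qs := qs) hC f z hWz
            obtain ⟨-, -, -, g4, g5⟩ := htri _ hmem
            obtain ⟨-, -, -, h4, h5⟩ := hcomp z hz
            have e4 : mu C (Mon.sconc f z) = mu C (Mon.sconc f m') := by omega
            exact hzneq (h5 e4)
          rw [this, smul_zero]
        · show ((Pp k qc qs fs) m' • twbar k qc qs f m') (Mon.sconc f m') = 0
          rw [Finsupp.notMem_support_iff.mp hm, zero_smul]
          rfl
        · show ((Pp k qc qs fs) m' • twbar k qc qs f m') (Mon.sconc f m') = 1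
          rw [ihcoeff]
          obtain ⟨-, hco⟩ := twbar_tri (k := k) (qc := qc) (qs := qs) hC f m' hWm
          rw [Finsupp.smul_apply, hco, smul_eq_mul, mul_one]

end StmtAux
namespace StmtAux
open Finsupp

lemma sup_Icc_one (c : ℕ) : (Finset.Icc 1 c).sup id = c := by
  rcases Nat.eq_zero_or_pos c with h | h
  · subst h
    rw [show Finset.Icc 1 0 = ∅ from by simp]
    rfl
  · apply le_antisymm
    · exact Finset.sup_le fun i hi => (Finset.mem_Icc.mp hi).2
    · exact Finset.le_sup (f := id) (Finset.mem_Icc.mpr ⟨h, le_refl c⟩)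

lemma maxInd_of_compact {l : List Mon} (hl : Mon.Compact l) :
    Mon.maxInd l = (Mon.IndAlph l).card := by
  show (Mon.IndAlph l).sup id = _
  conv_lhs => rw [hl]
  rw [sup_Icc_one]

lemma map_addEmb_Icc (c c' : ℕ) :
    (Finset.Icc 1 c').map (Mon.addEmb c) = Finset.Icc (c + 1) (c' + c) := by
  ext i
  simp only [Finset.mem_map, Finset.mem_Icc, addEmb_apply']
  constructor
  · rintro ⟨j, hj, rfl⟩; omega
  · intro h
    exact ⟨i - c, by omega, by omega⟩

lemma compact_sconc {l l' : List Mon} (hl : Mon.Compact l) (hl' : Mon.Compact l') :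
    Mon.Compact (Mon.sconc l l') := by
  have key : Mon.IndAlph (Mon.sconc l l')
      = Finset.Icc 1 ((Mon.IndAlph l).card + (Mon.IndAlph l').card) := by
    rw [IndAlph_sconc, maxInd_of_compact hl]
    conv_lhs => rw [hl, hl']
    rw [map_addEmb_Icc]
    ext i
    simp only [Finset.mem_union, Finset.mem_Icc, Nat.card_Icc]
    omega
  show Mon.IndAlph _ = Finset.Icc 1 (Mon.IndAlph _).card
  rw [key]
  congr 1
  rw [Nat.card_Icc]
  omega

lemma compact_of_IndAlph_eq {z l : List Mon} (h : Mon.IndAlph z = Mon.IndAlph l)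
    (hl : Mon.Compact l) : Mon.Compact z := by
  show Mon.IndAlph z = Finset.Icc 1 (Mon.IndAlph z).card
  rw [h]
  exact hl

lemma compact_nil : Mon.Compact ([] : List Mon) := by
  show Mon.IndAlph [] = Finset.Icc 1 (Mon.IndAlph ([] : List Mon)).card
  rw [IndAlph_nil]
  simp

end StmtAux

theorem B_basis_and_multiplicative' (k : Type*) [CommRing k] (qc qs : k)
    (B : List Mon → FreeL k)
    (hB0 : B [] = Finsupp.single [] 1)
    (hB : ∀ (l : List Mon) (fs : List (List Mon)), Mon.Compact l → l ≠ [] →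
        (∀ x ∈ fs, Mon.SIrred x) → fs.foldr Mon.sconc [] = l →
        B l = (fs.map fun x => Finsupp.single x (1 : k)).foldr
            (fun a b => twbarL k qc qs a b) (Finsupp.single [] 1)) :
    (LinearIndependent k fun l : {l : List Mon // Mon.Compact l} => B l.1) ∧
    Submodule.span k (Set.range fun l : {l : List Mon // Mon.Compact l} => B l.1)
      = CompSpan k ∧
    ∀ l l' : List Mon, Mon.Compact l → Mon.Compact l' →
      B (Mon.sconc l l') = twbarL k qc qs (B l) (B l') := by
  classical
  open StmtAux in
  -- every compact list has a factorization computing B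
  have hBfact : ∀ l : List Mon, Mon.Compact l → ∃ fs : List (List Mon),
      (∀ x ∈ fs, Mon.SIrred x) ∧ fs.foldr Mon.sconc [] = l ∧ B l = Pp k qc qs fs := by
    intro l hl
    by_cases hnil : l = []
    · subst hnil
      exact ⟨[], by simp, rfl, by rw [hB0, Pp_nil]⟩
    · obtain ⟨fs, h1, h2⟩ := exists_factorization l.length l le_rfl hnil
      exact ⟨fs, h1, h2, hB l fs hl hnil h1 h2⟩
  -- triangularity of B
  have hBtri : ∀ l : List Mon, Mon.Compact l →
      (∀ z ∈ (B l).support,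
          wl Mon.w z = wl Mon.w l ∧
          Mon.IndAlph z = Mon.IndAlph l ∧
          mu (wl Mon.w l + 1) z ≤ mu (wl Mon.w l + 1) l ∧
          (mu (wl Mon.w l + 1) z = mu (wl Mon.w l + 1) l → z = l)) ∧
      (B l) l = 1 := by
    intro l hl
    obtain ⟨fs, h1, h2, h3⟩ := hBfact l hl
    rw [h3]
    have := Pp_tri (k := k) (qc := qc) (qs := qs) (C := wl Mon.w l + 1)
      (by omega) fs (by rw [h2]; omega)
    rw [h2] at this
    obtain ⟨hsupp, hco⟩ := this
    exact ⟨fun z hz => by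
      obtain ⟨a1, a2, a3, a4, a5⟩ := hsupp z hz
      exact ⟨a1, a3, a4, a5⟩, hco⟩
  refine ⟨?_, ?_, ?_⟩
  · -- linear independence
    rw [linearIndependent_iff]
    intro c hc
    by_contra hcne
    have hS : c.support.Nonempty := Finsupp.support_nonempty_iff.mpr hcne
    obtain ⟨lw, hlwS, hlwmax⟩ := Finset.exists_max_image c.support
      (fun l => wl Mon.w l.1) hS
    set W := wl Mon.w lw.1 with hW
    set S2 := c.support.filter (fun l => wl Mon.w l.1 = W) with hS2
    have hS2ne : S2.Nonempty := ⟨lw, Finset.mem_filter.mpr ⟨hlwS, rfl⟩⟩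
    obtain ⟨l₀, hl₀S2, hl₀max⟩ := Finset.exists_max_image S2
      (fun l => mu (W + 1) l.1) hS2ne
    have hl₀S : l₀ ∈ c.support := (Finset.mem_filter.mp hl₀S2).1
    have hl₀W : wl Mon.w l₀.1 = W := (Finset.mem_filter.mp hl₀S2).2
    have happ : (Finsupp.linearCombination k
        (fun l : {l : List Mon // Mon.Compact l} => B l.1)) c l₀.1 = 0 := by
      rw [hc]; rfl
    rw [Finsupp.linearCombination_apply, Finsupp.sum_apply] at happ
    have hsum : (c.sum fun l a => (a • B l.1) l₀.1) = c l₀ := by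
      unfold Finsupp.sum
      refine Eq.trans (Finset.sum_eq_single l₀ (fun l hlS hlne => ?_) (fun h => ?_)) ?_
      · show (c l • B l.1) l₀.1 = 0
        rw [Finsupp.smul_apply]
        have hz : (B l.1) l₀.1 = 0 := by
          by_contra hne
          have hmem : l₀.1 ∈ (B l.1).support := Finsupp.mem_support_iff.mpr hne
          obtain ⟨hsupp, -⟩ := hBtri l.1 l.2
          obtain ⟨a1, -, a4, a5⟩ := hsupp l₀.1 hmem
          have hwl : wl Mon.w l.1 = W := by
            have h1 : wl Mon.w l.1 ≤ W := hlwmax l hlS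
            omega
          have hlS2 : l ∈ S2 := Finset.mem_filter.mpr ⟨hlS, hwl⟩
          have h2 : mu (W + 1) l.1 ≤ mu (W + 1) l₀.1 := hl₀max l hlS2
          rw [hwl] at a4 a5
          have : l₀.1 = l.1 := a5 (by omega)
          exact hlne (Subtype.ext this.symm)
        rw [hz, smul_zero]
      · exact absurd hl₀S h
      · show (c l₀ • B l₀.1) l₀.1 = c l₀
        obtain ⟨-, hco⟩ := hBtri l₀.1 l₀.2
        rw [Finsupp.smul_apply, hco, smul_eq_mul, mul_one]
    rw [hsum] at happ
    exact (Finsupp.mem_support_iff.mp hl₀S) happ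
  · -- span equality
    apply le_antisymm
    · rw [Submodule.span_le]
      rintro x ⟨l, rfl⟩
      refine SetLike.mem_coe.mpr ?_
      show B l.1 ∈ CompSpan k
      obtain ⟨hsupp, -⟩ := hBtri l.1 l.2
      rw [← Finsupp.sum_single (B l.1)]
      apply Submodule.finsuppSum_mem
      intro z hz
      have hzc : Mon.Compact z := by
        obtain ⟨-, a2, -, -⟩ := hsupp z (Finsupp.mem_support_iff.mpr hz)
        exact compact_of_IndAlph_eq a2 l.2
      rw [← Finsupp.smul_single_one z (B l.1 z)]
      exact Submodule.smul_mem _ _ (Submodule.subset_span ⟨z, hzc, rfl⟩)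
    · unfold CompSpan
      rw [Submodule.span_le]
      rintro x ⟨l, hl, rfl⟩
      set sp := Submodule.span k
        (Set.range fun l : {l : List Mon // Mon.Compact l} => B l.1) with hsp
      have key : ∀ (n : ℕ) (l : List Mon), Mon.Compact l →
          mu (wl Mon.w l + 1) l < n → Finsupp.single l (1 : k) ∈ sp := by
        intro n
        induction n with
        | zero => intro l _ h; omega
        | succ n ih =>
            intro l hlc hmu
            obtain ⟨hsupp, hco⟩ := hBtri l hlc
            have hdecomp : Finsupp.single l (1 : k) = B l - Finsupp.erase l (B l) := by
              have h := Finsupp.single_add_erase l (B l)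
              rw [hco] at h
              exact eq_sub_of_add_eq h
            rw [hdecomp]
            apply Submodule.sub_mem
            · exact Submodule.subset_span ⟨⟨l, hlc⟩, rfl⟩
            · rw [← Finsupp.sum_single (Finsupp.erase l (B l))]
              apply Submodule.finsuppSum_mem
              intro z hz
              have hzne : z ≠ l := by
                intro h
                subst h
                rw [Finsupp.erase_same] at hz
                exact hz rfl
              have hzmem : z ∈ (B l).support := by
                rw [Finsupp.mem_support_iff]
                rw [Finsupp.erase_ne hzne] at hz
                exact hz
              obtain ⟨a1, a2, a4, a5⟩ := hsupp z hzmem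
              have hzc : Mon.Compact z := compact_of_IndAlph_eq a2 hlc
              have hmuz : mu (wl Mon.w z + 1) z < n := by
                rw [a1]
                have : mu (wl Mon.w l + 1) z ≠ mu (wl Mon.w l + 1) l :=
                  fun h => hzne (a5 h)
                omega
              rw [Finsupp.erase_ne hzne, ← Finsupp.smul_single_one z (B l z)]
              exact Submodule.smul_mem _ _ (ih z hzc hmuz)
      exact key (mu (wl Mon.w l + 1) l + 1) l hl (by omega)
  · -- multiplicativity
    intro l l' hl hl'
    by_cases hnil : l = []
    · subst hnil
      rw [sconc_nil_left, hB0, twbarL_nil_left]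
    · by_cases hnil' : l' = []
      · subst hnil'
        rw [sconc_nil_right, hB0, twbarL_nil_right]
      · obtain ⟨fs, h1, h2, h3⟩ := hBfact l hl
        obtain ⟨fs', h1', h2', h3'⟩ := hBfact l' hl'
        have hcomp : Mon.Compact (Mon.sconc l l') := compact_sconc hl hl'
        have hne : Mon.sconc l l' ≠ [] := by
          intro h
          have := sconc_length l l'
          rw [h] at this
          simp at this
          exact hnil (List.length_eq_zero_iff.mp (by omega))
        have hall : ∀ x ∈ fs ++ fs', Mon.SIrred x := by
          intro x hx
          rcases List.mem_append.mp hx with h | h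
          · exact h1 x h
          · exact h1' x h
        have hfold : (fs ++ fs').foldr Mon.sconc [] = Mon.sconc l l' := by
          rw [foldr_sconc_append, h2, h2']
        have := hB (Mon.sconc l l') (fs ++ fs') hcomp hne hall hfold
        rw [this, show ((fs ++ fs').map fun x => Finsupp.single x (1 : k)).foldr
            (fun a b => twbarL k qc qs a b) (Finsupp.single [] 1)
            = Pp k qc qs (fs ++ fs') from rfl,
          Pp_append, h3, h3']

/-- ** Statement 18 **: let `B` send the empty list to itself and a nonempty compact list
`l` with (unique) factorization `l = l₁ ∗̄ ⋯ ∗̄ l_r` into `∗̄`-irreducibles to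
`l₁ ↑̄ ⋯ ↑̄ l_r`.  Then (α) the family `(B l)`, indexed by compact lists, is a `k`-basis of
the span of the compact lists, and (β) `B (l ∗̄ l') = B l ↑̄ B l'` for compact `l, l'`. -/
theorem B_basis_and_multiplicative (k : Type*) [CommRing k] (qc qs : k)
    (B : List Mon → FreeL k)
    (hB0 : B [] = Finsupp.single [] 1)
    (hB : ∀ (l : List Mon) (fs : List (List Mon)), Mon.Compact l → l ≠ [] →
        (∀ x ∈ fs, Mon.SIrred x) → fs.foldr Mon.sconc [] = l →
        B l = (fs.map fun x => Finsupp.single x (1 : k)).foldr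
            (fun a b => twbarL k qc qs a b) (Finsupp.single [] 1)) :
    (LinearIndependent k fun l : {l : List Mon // Mon.Compact l} => B l.1) ∧
    Submodule.span k (Set.range fun l : {l : List Mon // Mon.Compact l} => B l.1)
      = CompSpan k ∧
    ∀ l l' : List Mon, Mon.Compact l → Mon.Compact l' →
      B (Mon.sconc l l') = twbarL k qc qs (B l) (B l') := by
  exact B_basis_and_multiplicative' k qc qs B hB0 hB
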